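/- Let 0 < p < 1, q = 1 − p, let b be a boundary with exit weights π, let k ≥ 1 be an integer, and let c₀ ∈ ℤ × ℤ. Then for every integer n and every τ ∈ ℤ the unified contiguous relation holds: π(τ) · F̃_n(b_k(τ) − c₀) = F̃_{n+1}(b_{k−1}(τ+1) − c₀) − F̃_{n+1}(b_{k−1}(τ) − c₀), where b_{k−1}(τ) = b(τ) + (−(k−2), 0) and the subtraction of c₀ is componentwise. -/

import Mathlib

open Complex

/-- A staircase-like boundary in the space-time plane: at each `τ` the boundary makes
either a horizontal step `(-1, 0)` or a vertical step `(0, 1)`. -/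
structure Boundary where
  b : ℤ → ℤ × ℤ
  step : ∀ τ : ℤ, b (τ + 1) = b τ + (-1, 0) ∨ b (τ + 1) = b τ + (0, 1)

/-- Exit weight: `p` for a vertical step, `1` for a horizontal step. -/
def exitWeight (p : ℝ) (B : Boundary) (τ : ℤ) : ℝ :=
  if B.b (τ + 1) = B.b τ + (0, 1) then p else 1

/-- The function `F̃_n(x,t)` as a contour integral over the circle `|w| = r`,
`0 < r < min 1 (p/q)`. -/
noncomputable def Ftilde (p r : ℝ) (n : ℤ) (z : ℤ × ℤ) : ℂ :=
  (2 * Real.pi * Complex.I)⁻¹ *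
    ∮ w in C(0, r), ((1 - p : ℂ) + p / w) ^ z.2 * (1 - w) ^ (-n) * w ^ (z.1 - 1)

lemma sphere_facts {p r : ℝ} (hp0 : 0 < p) (hp1 : p < 1) (hr0 : 0 < r)
    (hr1 : r < min 1 (p / (1 - p))) {w : ℂ} (hw : w ∈ Metric.sphere (0:ℂ) r) :
    w ≠ 0 ∧ (1 : ℂ) - w ≠ 0 ∧ ((1 - p : ℂ) + p / w) ≠ 0 := by
  have habs : ‖w‖ = r := by simpa [Complex.dist_eq] using hw
  have hw0 : w ≠ 0 := by
    intro h; rw [h] at habs; simp at habs; linarith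
  refine ⟨hw0, ?_, ?_⟩
  · intro h
    have hw1 : w = 1 := by linear_combination -h
    rw [hw1] at habs
    simp at habs
    have := lt_of_lt_of_le hr1 (min_le_left _ _)
    linarith
  · intro h
    have hq : (0:ℝ) < 1 - p := by linarith
    have hw' : w * (1 - (p:ℂ)) = -p := by
      have h2 := congrArg (· * w) h
      simp only [zero_mul] at h2
      field_simp at h2
      linear_combination h2
    have habs2 : ‖w * (1 - (p:ℂ))‖ = ‖-(p:ℂ)‖ := by rw [hw']
    rw [norm_mul, norm_neg] at habs2
    have h1 : ‖(1:ℂ) - p‖ = 1 - p := by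
      rw [show ((1:ℂ) - p) = ((1 - p : ℝ) : ℂ) by push_cast; ring, Complex.norm_real, Real.norm_eq_abs,
        _root_.abs_of_pos hq]
    have h2 : ‖(p : ℂ)‖ = p := by
      rw [Complex.norm_real, Real.norm_eq_abs, _root_.abs_of_pos hp0]
    rw [habs, h1, h2] at habs2
    have hlt := lt_of_lt_of_le hr1 (min_le_right _ _)
    have hre : p / (1 - p) = r := by
      rw [div_eq_iff (ne_of_gt hq)]; linarith [habs2]
    rw [hre] at hlt
    exact lt_irrefl _ hlt

lemma Ftilde_integrable (p r : ℝ) (hp0 : 0 < p) (hp1 : p < 1) (hr0 : 0 < r)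
    (hr1 : r < min 1 (p / (1 - p))) (n X T : ℤ) :
    CircleIntegrable (fun w : ℂ => ((1 - p : ℂ) + p / w) ^ T * (1 - w) ^ (-n) * w ^ (X - 1))
      0 r := by
  apply ContinuousOn.circleIntegrable hr0.le
  have h1 : ContinuousOn (fun w : ℂ => (1 - p : ℂ) + p / w) (Metric.sphere (0:ℂ) r) :=
    continuousOn_const.add (continuousOn_const.div continuousOn_id fun w hw =>
      (sphere_facts hp0 hp1 hr0 hr1 hw).1)
  exact ((h1.zpow₀ T fun w hw => Or.inl (sphere_facts hp0 hp1 hr0 hr1 hw).2.2).mul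
    ((continuousOn_const.sub continuousOn_id).zpow₀ (-n)
      fun w hw => Or.inl (sphere_facts hp0 hp1 hr0 hr1 hw).2.1)).mul
    (continuousOn_id.zpow₀ (X - 1) fun w hw =>
      Or.inl (sphere_facts hp0 hp1 hr0 hr1 hw).1)

lemma Ftilde_hor (p r : ℝ) (hp0 : 0 < p) (hp1 : p < 1) (hr0 : 0 < r)
    (hr1 : r < min 1 (p / (1 - p))) (n X T : ℤ) :
    Ftilde p r n (X - 1, T) =
      Ftilde p r (n + 1) (X - 1, T) - Ftilde p r (n + 1) (X, T) := by
  unfold Ftilde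
  rw [← mul_sub, ← circleIntegral.integral_sub
    (Ftilde_integrable p r hp0 hp1 hr0 hr1 (n+1) (X-1) T)
    (Ftilde_integrable p r hp0 hp1 hr0 hr1 (n+1) X T)]
  congr 1
  apply circleIntegral.integral_congr hr0.le
  intro w hw
  obtain ⟨hw0, hw1, hwq⟩ := sphere_facts hp0 hp1 hr0 hr1 hw
  simp only
  have e1 : ((1:ℂ)-w)^(-(n+1)) = (1-w)^(-n) * (1-w)⁻¹ := by
    rw [show -(n+1) = -n + (-1) by ring, zpow_add₀ hw1, zpow_neg_one]
  have e2 : w^(X-1) = w^(X-1-1) * w := by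
    rw [← zpow_add_one₀ hw0]; congr 1; ring
  rw [e1, e2]
  generalize ((1 - (p:ℂ)) + p / w) ^ T = A
  generalize ((1:ℂ) - w) ^ (-n) = a
  generalize w ^ (X - 1 - 1) = b
  field_simp

lemma Ftilde_ver (p r : ℝ) (hp0 : 0 < p) (hp1 : p < 1) (hr0 : 0 < r)
    (hr1 : r < min 1 (p / (1 - p))) (n X T : ℤ) :
    (p : ℂ) * Ftilde p r n (X - 1, T) =
      Ftilde p r (n + 1) (X, T + 1) - Ftilde p r (n + 1) (X, T) := by
  unfold Ftilde
  rw [← mul_sub, ← circleIntegral.integral_sub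
    (Ftilde_integrable p r hp0 hp1 hr0 hr1 (n+1) X (T+1))
    (Ftilde_integrable p r hp0 hp1 hr0 hr1 (n+1) X T)]
  have hcong : (∮ w in C(0, r),
      (((1 - p : ℂ) + p / w) ^ (T+1) * (1 - w) ^ (-(n+1)) * w ^ (X - 1) -
       ((1 - p : ℂ) + p / w) ^ T * (1 - w) ^ (-(n+1)) * w ^ (X - 1))) =
      ∮ w in C(0, r),
        (p : ℂ) • (((1 - p : ℂ) + p / w) ^ T * (1 - w) ^ (-n) * w ^ (X - 1 - 1)) := by
    apply circleIntegral.integral_congr hr0.le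
    intro w hw
    obtain ⟨hw0, hw1, hwq⟩ := sphere_facts hp0 hp1 hr0 hr1 hw
    simp only [smul_eq_mul]
    have e1 : ((1:ℂ)-w)^(-(n+1)) = (1-w)^(-n) * (1-w)⁻¹ := by
      rw [show -(n+1) = -n + (-1) by ring, zpow_add₀ hw1, zpow_neg_one]
    have e2 : w^(X-1) = w^(X-1-1) * w := by
      rw [← zpow_add_one₀ hw0]; congr 1; ring
    have e3 : ((1 - p : ℂ) + p / w) ^ (T+1) =
        ((1 - p : ℂ) + p / w) ^ T * ((1 - p : ℂ) + p / w) := by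
      rw [zpow_add₀ hwq, zpow_one]
    rw [e1, e2, e3]
    generalize ((1 - (p:ℂ)) + p / w) ^ T = A
    generalize ((1:ℂ) - w) ^ (-n) = a
    generalize w ^ (X - 1 - 1) = b
    field_simp
    ring
  rw [hcong, circleIntegral.integral_smul]
  simp only [smul_eq_mul]
  ring

/-- the unified contiguous relation along a boundary:
`π(τ)·F̃_n(b_k(τ) − c₀) = F̃_{n+1}(b_{k−1}(τ+1) − c₀) − F̃_{n+1}(b_{k−1}(τ) − c₀)`. -/
theorem contiguous_relation_boundary (p : ℝ) (hp0 : 0 < p) (hp1 : p < 1)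
    (B : Boundary) (k : ℤ) (hk : 1 ≤ k) (c₀ : ℤ × ℤ)
    (r : ℝ) (hr0 : 0 < r) (hr1 : r < min 1 (p / (1 - p)))
    (n τ : ℤ) :
    (exitWeight p B τ : ℂ) * Ftilde p r n (B.b τ + (-(k - 1), 0) - c₀) =
      Ftilde p r (n + 1) (B.b (τ + 1) + (-(k - 2), 0) - c₀) -
        Ftilde p r (n + 1) (B.b τ + (-(k - 2), 0) - c₀) := by
  obtain ⟨c1, c2⟩ := c₀
  rcases h0 : B.b τ with ⟨x, t⟩
  set X : ℤ := x - (k - 2) - c1 with hX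
  set T : ℤ := t - c2 with hT
  have hpt1 : ((x, t) : ℤ × ℤ) + (-(k - 1), 0) - (c1, c2) = (X - 1, T) := by
    simp [Prod.ext_iff, hX, hT]; omega
  have hpt2 : ((x, t) : ℤ × ℤ) + (-(k - 2), 0) - (c1, c2) = (X, T) := by
    simp [Prod.ext_iff, hX, hT]; omega
  rcases B.step τ with h | h
  · rw [h0] at h
    have hne : B.b (τ + 1) ≠ B.b τ + (0, 1) := by
      rw [h, h0]; intro hc
      have hc' := add_left_cancel hc
      simp [Prod.ext_iff] at hc'
    have hpt3 : ((x, t) : ℤ × ℤ) + (-1, 0) + (-(k - 2), 0) - (c1, c2) = (X - 1, T) := by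
      simp [Prod.ext_iff, hX, hT]; omega
    rw [h, hpt1, hpt2, hpt3]
    simp only [exitWeight, if_neg hne]
    push_cast
    rw [one_mul]
    exact Ftilde_hor p r hp0 hp1 hr0 hr1 n X T
  · rw [h0] at h
    have hcond : B.b (τ + 1) = B.b τ + (0, 1) := by rw [h, h0]
    have hpt3 : ((x, t) : ℤ × ℤ) + (0, 1) + (-(k - 2), 0) - (c1, c2) = (X, T + 1) := by
      simp [Prod.ext_iff, hX, hT]; omega
    rw [h, hpt1, hpt2, hpt3]
    simp only [exitWeight, if_pos hcond]
    exact Ftilde_ver p r hp0 hp1 hr0 hr1 n X T
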